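/- arXiv:1308.3675 — 3 statements merged into one kernel-verified Lean document; each statement's English description precedes it below -/
import Mathlib

section
/- On the open region where P2 > 0, the Dulac expression ∂/∂P1[(1/P2)(ε(1−P1−P2) − φ·P1·P2)] + ∂/∂P2[(1/P2)(φ·P1·P2 − μ·P2)] equals −(ε + φ·P2)/P2, which is strictly negative; hence (by Dulac's criterion) the mean-field system has no periodic orbits in the interior of the phase triangle. -/
theorem mf_dulac (ε φ μ : ℝ) (hε : 0 < ε) (hφ : 0 < φ) :
    ∀ P1 P2 : ℝ, 0 < P2 →
      deriv (fun x : ℝ => (1 / P2) * (ε * (1 - x - P2) - φ * x * P2)) P1 +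
        deriv (fun y : ℝ => (1 / y) * (φ * P1 * y - μ * y)) P2
        = -(ε + φ * P2) / P2 ∧
      -(ε + φ * P2) / P2 < 0 := by
  intro P1 P2 hP2
  have hne : P2 ≠ 0 := ne_of_gt hP2
  constructor
  · have h1 : (fun x : ℝ => (1 / P2) * (ε * (1 - x - P2) - φ * x * P2))
        = fun x : ℝ => (1 / P2) * (ε * (1 - P2)) + ((-ε - φ * P2) / P2) * x := by
      funext x; field_simp; ring
    have h2 : deriv (fun y : ℝ => (1 / y) * (φ * P1 * y - μ * y)) P2 = 0 := by
      have heq : (fun y : ℝ => (1 / y) * (φ * P1 * y - μ * y))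
          =ᶠ[nhds P2] fun _ : ℝ => φ * P1 - μ := by
        filter_upwards [eventually_ne_nhds hne] with y hy
        field_simp
      rw [heq.deriv_eq, deriv_const]
    rw [h1, h2]
    simp [deriv_const_mul, mul_comm]
    ring
  · apply div_neg_of_neg_of_pos _ hP2
    nlinarith
end

section
/- For fixed μ > 0, the limit of 4μ(μ+ε)/(2μ+3ε) as ε → 0⁺ is 2μ, and the limit as ε → ∞ is 4μ/3. Consequently: (a) if φ ≥ 2μ then for every ε > 0 one has φ > 4μ(μ+ε)/(2μ+3ε), hence Ī₀ > 1; (b) if φ < 4μ/3 then for every ε > 0 one has φ < 4μ(μ+ε)/(2μ+3ε), hence Ī₀ < 1. -/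
open Filter Topology in
theorem pa_threshold_limits (μ φ : ℝ) (hμ : 0 < μ) (hφ : 0 < φ) :
    Tendsto (fun ε : ℝ => 4 * μ * (μ + ε) / (2 * μ + 3 * ε))
      (nhdsWithin 0 (Set.Ioi 0)) (nhds (2 * μ)) ∧
    Tendsto (fun ε : ℝ => 4 * μ * (μ + ε) / (2 * μ + 3 * ε)) atTop (nhds (4 * μ / 3)) ∧
    (2 * μ ≤ φ → ∀ ε : ℝ, 0 < ε →
      4 * μ * (μ + ε) / (2 * μ + 3 * ε) < φ ∧
      1 < 3 * φ * (μ + ε) / (μ * (φ + 4 * μ + 4 * ε))) ∧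
    (φ < 4 * μ / 3 → ∀ ε : ℝ, 0 < ε →
      φ < 4 * μ * (μ + ε) / (2 * μ + 3 * ε) ∧
      3 * φ * (μ + ε) / (μ * (φ + 4 * μ + 4 * ε)) < 1) := by
  refine ⟨?_, ?_, ?_, ?_⟩
  · have h : Tendsto (fun ε : ℝ => 4 * μ * (μ + ε) / (2 * μ + 3 * ε))
        (nhds 0) (nhds (4 * μ * (μ + 0) / (2 * μ + 3 * 0))) := by
      apply Tendsto.div
      · exact (tendsto_const_nhds.mul (tendsto_const_nhds.add tendsto_id))
      · exact (tendsto_const_nhds.add (tendsto_const_nhds.mul tendsto_id))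
      · positivity
    have h2 : 4 * μ * (μ + 0) / (2 * μ + 3 * 0) = 2 * μ := by
      field_simp; ring
    rw [h2] at h
    exact h.mono_left nhdsWithin_le_nhds
  · have key : ∀ᶠ ε : ℝ in atTop,
        4 * μ * (μ + ε) / (2 * μ + 3 * ε) = 4 * μ / 3 + 4 * μ ^ 2 / (3 * (2 * μ + 3 * ε)) := by
      filter_upwards [eventually_gt_atTop 0] with ε hε
      have h1 : 2 * μ + 3 * ε > 0 := by positivity
      field_simp
      ring
    rw [tendsto_congr' key]
    have h3 : Tendsto (fun ε : ℝ => 4 * μ ^ 2 / (3 * (2 * μ + 3 * ε))) atTop (nhds 0) := by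
      apply Tendsto.div_atTop tendsto_const_nhds
      apply Tendsto.const_mul_atTop (by norm_num : (0:ℝ) < 3)
      apply tendsto_atTop_add_const_left
      exact Tendsto.const_mul_atTop (by norm_num : (0:ℝ) < 3) tendsto_id
    simpa using (tendsto_const_nhds (x := 4 * μ / 3) (f := atTop)).add h3
  · intro hle ε hε
    have hd : 0 < 2 * μ + 3 * ε := by positivity
    have hd2 : 0 < μ * (φ + 4 * μ + 4 * ε) := by positivity
    constructor
    · rw [div_lt_iff₀ hd]; nlinarith
    · rw [lt_div_iff₀ hd2]; nlinarith
  · intro hlt ε hε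
    have hd : 0 < 2 * μ + 3 * ε := by positivity
    have hd2 : 0 < μ * (φ + 4 * μ + 4 * ε) := by positivity
    constructor
    · rw [lt_div_iff₀ hd]; nlinarith
    · rw [div_lt_iff₀ hd2]; nlinarith
end

section
/- There exist parameter values with ε, μ, φ > 0 such that I₀ = φ/μ > 1 while Ī₀ = 3φ(μ+ε)/(μ(φ+4μ+4ε)) < 1; indeed, whenever 4μ/3 < φ < 4μ(μ+ε)/(2μ+3ε) both conditions hold (such φ exists when ε is sufficiently small). -/
theorem models_disagree :
    (∃ ε μ φ : ℝ, 0 < ε ∧ 0 < μ ∧ 0 < φ ∧ 1 < φ / μ ∧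
      3 * φ * (μ + ε) / (μ * (φ + 4 * μ + 4 * ε)) < 1) ∧
    (∀ ε μ φ : ℝ, 0 < ε → 0 < μ → 0 < φ →
      4 * μ / 3 < φ → φ < 4 * μ * (μ + ε) / (2 * μ + 3 * ε) →
      1 < φ / μ ∧ 3 * φ * (μ + ε) / (μ * (φ + 4 * μ + 4 * ε)) < 1) := by
  constructor
  · refine ⟨1/10, 1, 3/2, by norm_num, by norm_num, by norm_num, by norm_num, by norm_num⟩
  · intro ε μ φ hε hμ hφ h1 h2
    have hden : 0 < 2 * μ + 3 * ε := by linarith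
    have h2' : φ * (2 * μ + 3 * ε) < 4 * μ * (μ + ε) :=
      (lt_div_iff₀ hden).mp h2
    constructor
    · rw [lt_div_iff₀ hμ]; linarith
    · rw [div_lt_one (by positivity)]; nlinarith
end
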